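/- For any composition η = (η_1,...,η_r) of n, the rational function W_η(x,y) = (Σ_{w∈S_η} x^{maj(w)} y^{des(w)}) / Π_{j=0}^{n-1}(1 − x^j y) satisfies W_η(x,y) = (1 − x^n y) · ⊛_{i=1}^r Π_{j=0}^{η_i} (1 − x^j y)^{-1}, where ⊛ denotes the Hadamard product with respect to y. -/

import Mathlib

open Finset

noncomputable section
open scoped Classical

/-- 0-based block index of position `i` (0-based) with respect to the composition
`η` with `r` parts: the number of complete blocks that end at or before position `i`. -/
def blk (r : ℕ) (η : ℕ → ℕ) (i : ℕ) : ℕ :=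
  ((Finset.range r).filter (fun k => ∑ j ∈ Finset.range (k + 1), η j ≤ i)).card

/-- Descent set of a word of length `n` (0-based positions `i` with `w i > w (i+1)`). -/
def desSet (n : ℕ) (w : Fin n → ℕ) : Finset (Fin n) :=
  Finset.univ.filter (fun i => ∃ h : i.1 + 1 < n, w ⟨i.1 + 1, h⟩ < w i)

/-- Descent number. -/
def des (n : ℕ) (w : Fin n → ℕ) : ℕ := (desSet n w).card

/-- Major index (descents counted in 1-based positions). -/
def maj (n : ℕ) (w : Fin n → ℕ) : ℕ := ∑ i ∈ desSet n w, (i.1 + 1)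

/-- Excedance set of a word w.r.t. the trivial word of `η`. -/
def excSet (r : ℕ) (η : ℕ → ℕ) (n : ℕ) (w : Fin n → ℕ) : Finset (Fin n) :=
  Finset.univ.filter (fun i => blk r η i.1 < w i)

/-- Excedance number. -/
def exc (r : ℕ) (η : ℕ → ℕ) (n : ℕ) (w : Fin n → ℕ) : ℕ := (excSet r η n w).card

/-- Weak inversions of the exceeding subword. -/
def imvE (r : ℕ) (η : ℕ → ℕ) (n : ℕ) (w : Fin n → ℕ) : ℕ :=
  (Finset.univ.filter (fun p : Fin n × Fin n => p.1 < p.2 ∧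
    blk r η p.1.1 < w p.1 ∧ blk r η p.2.1 < w p.2 ∧ w p.2 ≤ w p.1)).card

/-- Inversions of the non-exceeding subword. -/
def invN (r : ℕ) (η : ℕ → ℕ) (n : ℕ) (w : Fin n → ℕ) : ℕ :=
  (Finset.univ.filter (fun p : Fin n × Fin n => p.1 < p.2 ∧
    ¬ blk r η p.1.1 < w p.1 ∧ ¬ blk r η p.2.1 < w p.2 ∧ w p.2 < w p.1)).card

/-- Han's Denert statistic on multiset permutations. -/
def denh (r : ℕ) (η : ℕ → ℕ) (n : ℕ) (w : Fin n → ℕ) : ℕ :=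
  (∑ i ∈ excSet r η n w, (i.1 + 1)) + imvE r η n w + invN r η n w

/-- The set `S_η` of multiset permutations: all rearrangements of the trivial word. -/
def msetPerms (r : ℕ) (η : ℕ → ℕ) (n : ℕ) : Finset (Fin n → ℕ) :=
  (Finset.univ : Finset (Equiv.Perm (Fin n))).image (fun σ i => blk r η (σ i).1)

/-- `η`-admissible permutations: `Des(σ) ⊆ Des(η)`. -/
def admissible (r : ℕ) (η : ℕ → ℕ) (n : ℕ) (σ : Equiv.Perm (Fin n)) : Prop :=
  ∀ i : Fin n, ∀ h : i.1 + 1 < n, σ ⟨i.1 + 1, h⟩ < σ i → blk r η i.1 < blk r η (i.1 + 1)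

/-- The multiset permutation `π_η(σ⁻¹)` associated with `σ ∈ S_n`. -/
def wordOf (r : ℕ) (η : ℕ → ℕ) (n : ℕ) (σ : Equiv.Perm (Fin n)) : Fin n → ℕ :=
  fun j => blk r η ((σ⁻¹ j).1)

/-- The set `I_σ = {j : π_η(σ⁻¹(j)) > π_η(j)}`. -/
def Iset (r : ℕ) (η : ℕ → ℕ) (n : ℕ) (σ : Equiv.Perm (Fin n)) : Finset (Fin n) :=
  Finset.univ.filter (fun j => blk r η j.1 < blk r η ((σ⁻¹ j).1))

def iexc (r : ℕ) (η : ℕ → ℕ) (n : ℕ) (σ : Equiv.Perm (Fin n)) : ℕ := (Iset r η n σ).card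

/-- `N⁺_σ`. -/
def Nplus (r : ℕ) (η : ℕ → ℕ) (n : ℕ) (σ : Equiv.Perm (Fin n)) : Finset (Fin n × Fin n) :=
  Finset.univ.filter (fun p => blk r η p.1.1 ≤ blk r η p.2.1 ∧ σ p.1 < p.2 ∧ σ⁻¹ p.2 < p.1)

/-- `N⁻_σ`. -/
def Nminus (r : ℕ) (η : ℕ → ℕ) (n : ℕ) (σ : Equiv.Perm (Fin n)) : Finset (Fin n × Fin n) :=
  Finset.univ.filter (fun p => blk r η p.2.1 < blk r η p.1.1 ∧ σ p.1 < p.2 ∧ p.1 < σ⁻¹ p.2)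

/-- Denert's statistic. -/
def den (r : ℕ) (η : ℕ → ℕ) (n : ℕ) (σ : Equiv.Perm (Fin n)) : ℤ :=
  (∑ j ∈ Iset r η n σ, (j.1 + 1) : ℕ) + (Nplus r η n σ).card - (Nminus r η n σ).card
    - iexc r η n σ

namespace MacAux
open PowerSeries

variable {F : Type*} [Field F]

def geom (c : F) : PowerSeries F := PowerSeries.mk fun t => c ^ t

lemma geom_mul_one_sub (c : F) : geom c * (1 - C c * X) = 1 := by
  ext k
  rcases k with _ | k
  · simp [geom]
  · simp only [mul_sub, mul_one, map_sub, geom]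
    rw [show (PowerSeries.mk fun t => c ^ t) * (C c * X)
        = C c * (X * PowerSeries.mk fun t => c ^ t) by ring]
    simp [PowerSeries.coeff_succ_X_mul, pow_succ, mul_comm]

lemma constCoeff_one_sub (c : F) : constantCoeff (1 - C c * X) ≠ 0 := by
  simp

lemma prod_inv_eq (x : F) (s : Finset ℕ) :
    (∏ j ∈ s, (1 - C (x ^ j) * X))⁻¹ = ∏ j ∈ s, geom (x ^ j) := by
  rw [PowerSeries.inv_eq_iff_mul_eq_one]
  · rw [← Finset.prod_mul_distrib]
    exact Finset.prod_eq_one fun j _ => geom_mul_one_sub _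
  · rw [map_prod]
    exact Finset.prod_ne_zero_iff.2 fun j _ => constCoeff_one_sub _

lemma rescale_geom (x c : F) : rescale x (geom c) = geom (x * c) := by
  ext k; simp [geom, coeff_rescale, coeff_mk, mul_pow]

lemma coeff_geom_prod_succ (x : F) (m k : ℕ) :
    coeff k (∏ j ∈ range (m + 1 + 1), geom (x ^ j)) =
      ∑ t ∈ range (k + 1), x ^ t * coeff t (∏ j ∈ range (m + 1), geom (x ^ j)) := by
  rw [Finset.prod_range_succ' (fun j => geom (x ^ j))]
  have h1 : (∏ j ∈ range (m + 1), geom (x ^ (j + 1)))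
      = rescale x (∏ j ∈ range (m + 1), geom (x ^ j)) := by
    rw [map_prod]
    refine Finset.prod_congr rfl fun j _ => ?_
    rw [rescale_geom, ← pow_succ']
  rw [h1, PowerSeries.coeff_mul, Finset.Nat.sum_antidiagonal_eq_sum_range_succ_mk]
  refine Finset.sum_congr rfl fun t _ => ?_
  rw [coeff_rescale]
  simp [geom, coeff_mk]


/-! ### Blocks -/

def Sp (η : ℕ → ℕ) (b : ℕ) : ℕ := ∑ j ∈ range b, η j

lemma Sp_mono (η : ℕ → ℕ) : Monotone (Sp η) := fun a b h =>
  Finset.sum_le_sum_of_subset (Finset.range_subset_range.2 h)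

lemma blk_card (r : ℕ) (η : ℕ → ℕ) (i : ℕ) :
    blk r η i = ((range r).filter (fun b => Sp η (b + 1) ≤ i)).card := rfl

lemma blk_mono (r : ℕ) (η : ℕ → ℕ) {i i' : ℕ} (h : i ≤ i') : blk r η i ≤ blk r η i' := by
  rw [blk_card, blk_card]
  refine Finset.card_le_card fun b hb => ?_
  simp only [Finset.mem_filter] at hb ⊢
  exact ⟨hb.1, le_trans hb.2 h⟩

lemma blk_eval (r : ℕ) (η : ℕ → ℕ) {b j : ℕ} (hb : b < r) (hj : j < η b) :
    blk r η (Sp η b + j) = b := by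
  rw [blk_card]
  have : (range r).filter (fun b' => Sp η (b' + 1) ≤ Sp η b + j) = range b := by
    ext b'
    simp only [Finset.mem_filter, Finset.mem_range]
    constructor
    · rintro ⟨h1, h2⟩
      by_contra hc
      push_neg at hc
      have : Sp η (b + 1) ≤ Sp η (b' + 1) := Sp_mono η (by omega)
      have hb1 : Sp η (b + 1) = Sp η b + η b := Finset.sum_range_succ η b
      omega
    · intro h
      refine ⟨by omega, ?_⟩
      exact le_trans (Sp_mono η (show b' + 1 ≤ b by omega)) (Nat.le_add_right _ _)
  rw [this, Finset.card_range]

lemma blk_lt_of_lt (r : ℕ) (η : ℕ → ℕ) {i s : ℕ} (hs : s ≤ r) (hi : i < Sp η s) :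
    blk r η i < s := by
  rcases Nat.eq_zero_or_pos s with hs0 | hs0
  · subst hs0; simp [Sp] at hi
  have hsub : (range r).filter (fun b => Sp η (b + 1) ≤ i) ⊆ range (s - 1) := by
    intro b hb
    simp only [Finset.mem_filter, Finset.mem_range] at hb ⊢
    by_contra hc
    push_neg at hc
    have : Sp η s ≤ Sp η (b + 1) := Sp_mono η (by omega)
    omega
  calc blk r η i ≤ (range (s-1)).card := Finset.card_le_card hsub
    _ < s := by rw [Finset.card_range]; omega

/-! ### Decreasing functions and the q-binomial sum -/

def Dec (m k : ℕ) : Finset (Fin m → ℕ) :=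
  (Fintype.piFinset fun _ : Fin m => Finset.range (k + 1)).filter
    fun g => ∀ i j : Fin m, i ≤ j → g j ≤ g i

def Ssum (x : F) (m k : ℕ) : F := ∑ g ∈ Dec m k, x ^ (∑ i, g i)

lemma Dec_zero (k : ℕ) : Dec 0 k = {fun i : Fin 0 => i.elim0} := by
  ext g
  simp only [Dec, Finset.mem_filter, Fintype.mem_piFinset, Finset.mem_singleton]
  constructor
  · rintro -
    funext i; exact i.elim0
  · rintro rfl
    exact ⟨fun i => i.elim0, fun i => i.elim0⟩

lemma Ssum_zero (x : F) (k : ℕ) : Ssum x 0 k = 1 := by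
  rw [Ssum, Dec_zero, Finset.sum_singleton]
  simp

lemma Ssum_succ (x : F) (m k : ℕ) :
    Ssum x (m + 1) k = ∑ t ∈ range (k + 1), x ^ t * Ssum x m t := by
  rw [Ssum]
  have : ∀ t ∈ range (k+1), x ^ t * Ssum x m t = ∑ g ∈ Dec m t, x ^ (t + ∑ i, g i) := by
    intro t _
    rw [Ssum, Finset.mul_sum]
    exact Finset.sum_congr rfl fun g _ => by rw [pow_add]
  rw [Finset.sum_congr rfl this, Finset.sum_sigma']
  refine Finset.sum_bij' (fun g _ => ⟨g 0, fun i => g i.succ⟩)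
    (fun p _ => Fin.cons p.1 p.2) ?_ ?_ ?_ ?_ ?_
  · intro g hg
    simp only [Dec, Finset.mem_filter, Fintype.mem_piFinset, Finset.mem_range] at hg
    obtain ⟨hb, hd⟩ := hg
    simp only [Finset.mem_sigma, Finset.mem_range, Dec, Finset.mem_filter,
      Fintype.mem_piFinset, Finset.mem_range]
    refine ⟨hb 0, ⟨fun i => ?_, fun i j hij => hd i.succ j.succ (Fin.succ_le_succ_iff.mpr hij)⟩⟩
    have := hd 0 i.succ (Fin.zero_le _)
    omega
  · intro p hp
    simp only [Finset.mem_sigma, Finset.mem_range, Dec, Finset.mem_filter,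
      Fintype.mem_piFinset, Finset.mem_range] at hp
    obtain ⟨hk, hb, hd⟩ := hp
    simp only [Dec, Finset.mem_filter, Fintype.mem_piFinset, Finset.mem_range]
    constructor
    · intro i
      refine Fin.cases ?_ (fun i => ?_) i
      · simpa using hk
      · simp only [Fin.cons_succ]
        have := hb i
        omega
    · intro i j hij
      rcases Fin.eq_zero_or_eq_succ i with rfl | ⟨i', rfl⟩
      · rcases Fin.eq_zero_or_eq_succ j with rfl | ⟨j', rfl⟩
        · exact le_refl _
        · simp only [Fin.cons_succ, Fin.cons_zero]
          have := hb j'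
          omega
      · rcases Fin.eq_zero_or_eq_succ j with rfl | ⟨j', rfl⟩
        · have h0 := Fin.le_def.mp hij
          simp only [Fin.val_succ, Fin.val_zero] at h0
          omega
        · simp only [Fin.cons_succ]
          exact hd i' j' (Fin.succ_le_succ_iff.mp hij)
  · intro g hg
    exact Fin.cons_self_tail g
  · intro p hp
    simp
  · intro g hg
    rw [Fin.sum_univ_succ]

lemma coeff_geom_prod (x : F) (m k : ℕ) :
    coeff k (∏ j ∈ range (m + 1), geom (x ^ j)) = Ssum x m k := by
  induction m generalizing k with
  | zero =>
    rw [Ssum_zero]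
    simp [geom, coeff_mk]
  | succ m ih =>
    rw [coeff_geom_prod_succ, Ssum_succ]
    exact Finset.sum_congr rfl fun t _ => by rw [ih]

/-! ### Block-decreasing functions, gluing -/

lemma Sp_succ (η : ℕ → ℕ) (s : ℕ) : Sp η (s + 1) = Sp η s + η s := Finset.sum_range_succ η s

def BDpart (n r : ℕ) (η : ℕ → ℕ) (s k : ℕ) : Finset (Fin n → ℕ) :=
  (Fintype.piFinset fun _ : Fin n => Finset.range (k + 1)).filter
    fun g => (∀ i : Fin n, Sp η s ≤ i.1 → g i = 0) ∧
      ∀ (i : ℕ) (h1 : i + 1 < n), i + 1 < Sp η s → blk r η i = blk r η (i + 1) →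
        g ⟨i + 1, h1⟩ ≤ g ⟨i, by omega⟩

lemma mem_BDpart {n r : ℕ} {η : ℕ → ℕ} {s k : ℕ} {g : Fin n → ℕ} :
    g ∈ BDpart n r η s k ↔ (∀ i : Fin n, g i ≤ k) ∧ (∀ i : Fin n, Sp η s ≤ i.1 → g i = 0) ∧
      ∀ (i : ℕ) (h1 : i + 1 < n), i + 1 < Sp η s → blk r η i = blk r η (i + 1) →
        g ⟨i + 1, h1⟩ ≤ g ⟨i, by omega⟩ := by
  simp only [BDpart, Finset.mem_filter, Fintype.mem_piFinset, Finset.mem_range]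
  constructor
  · rintro ⟨h1, h2, h3⟩; exact ⟨fun i => by have := h1 i; omega, h2, h3⟩
  · rintro ⟨h1, h2, h3⟩; exact ⟨fun i => by have := h1 i; omega, h2, h3⟩

lemma BDpart_blockmono {n r : ℕ} {η : ℕ → ℕ} {s k : ℕ} {g : Fin n → ℕ}
    (hg : g ∈ BDpart n r η s k) :
    ∀ (a b : ℕ) (han : a < n) (hbn : b < n), a ≤ b → b < Sp η s →
      blk r η a = blk r η b → g ⟨b, hbn⟩ ≤ g ⟨a, han⟩ := by
  obtain ⟨-, -, hdec⟩ := mem_BDpart.mp hg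
  have key : ∀ (d a : ℕ) (han : a < n) (hdn : a + d < n), a + d < Sp η s →
      blk r η a = blk r η (a + d) → g ⟨a + d, hdn⟩ ≤ g ⟨a, han⟩ := by
    intro d
    induction d with
    | zero => intro a _ _ _ _; exact le_refl _
    | succ d ih =>
      intro a han hdn hs hblk
      have hm1 : blk r η a ≤ blk r η (a + d) := blk_mono r η (by omega)
      have hm2 : blk r η (a + d) ≤ blk r η (a + (d + 1)) := blk_mono r η (by omega)
      have e1 : blk r η a = blk r η (a + d) := by omega
      have e2 : blk r η (a + d) = blk r η (a + (d + 1)) := by omega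
      have step : g ⟨a + d + 1, by omega⟩ ≤ g ⟨a + d, by omega⟩ :=
        hdec (a + d) (by omega) (by omega) e2
      exact le_trans step (ih a han (by omega) (by omega) e1)
  intro a b han hbn hab hbs hblk
  have h2 : a + (b - a) = b := by omega
  have hk := key (b - a) a han (by omega) (by omega) (by rw [h2]; exact hblk)
  have hfin : (⟨a + (b - a), by omega⟩ : Fin n) = ⟨b, hbn⟩ := Fin.ext h2
  rwa [hfin] at hk

lemma BDpart_zero (n r : ℕ) (η : ℕ → ℕ) (k : ℕ) :
    BDpart n r η 0 k = {fun _ => 0} := by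
  ext g
  simp only [mem_BDpart, Finset.mem_singleton]
  constructor
  · rintro ⟨-, hz, -⟩
    funext i
    exact hz i (by simp [Sp])
  · rintro rfl
    exact ⟨fun i => Nat.zero_le k, fun i _ => rfl, fun i h1 h2 h3 => le_refl _⟩

def glueF {n : ℕ} (η : ℕ → ℕ) (s : ℕ) (g : Fin n → ℕ) (h : Fin (η s) → ℕ) : Fin n → ℕ :=
  fun i => if hlt : i.1 < Sp η s then g i
    else if hlt2 : i.1 - Sp η s < η s then h ⟨i.1 - Sp η s, hlt2⟩ else 0

lemma glueF_lo {n : ℕ} {η : ℕ → ℕ} {s : ℕ} {g : Fin n → ℕ} {h : Fin (η s) → ℕ} {i : Fin n}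
    (hi : i.1 < Sp η s) : glueF η s g h i = g i := dif_pos hi

lemma glueF_mid {n : ℕ} {η : ℕ → ℕ} {s : ℕ} {g : Fin n → ℕ} {h : Fin (η s) → ℕ} {i : Fin n}
    (hi : Sp η s ≤ i.1) (h2 : i.1 - Sp η s < η s) :
    glueF η s g h i = h ⟨i.1 - Sp η s, h2⟩ := by
  rw [glueF, dif_neg (by omega), dif_pos h2]

lemma glueF_hi {n : ℕ} {η : ℕ → ℕ} {s : ℕ} {g : Fin n → ℕ} {h : Fin (η s) → ℕ} {i : Fin n}
    (hi : Sp η s + η s ≤ i.1) : glueF η s g h i = 0 := by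
  rw [glueF, dif_neg (by omega), dif_neg (by omega)]

lemma sum_glueF {n r : ℕ} {η : ℕ → ℕ} {s k : ℕ} (hn : Sp η s + η s ≤ n) (hp : 0 < η s)
    (g : Fin n → ℕ) (h : Fin (η s) → ℕ) (hg : g ∈ BDpart n r η s k) :
    ∑ i, glueF η s g h i = (∑ i, g i) + ∑ t, h t := by
  obtain ⟨-, hz, -⟩ := mem_BDpart.mp hg
  rw [← Finset.sum_filter_add_sum_filter_not Finset.univ (fun i : Fin n => i.1 < Sp η s)
    (glueF η s g h)]
  have e1 : ∑ i ∈ Finset.univ.filter (fun i : Fin n => i.1 < Sp η s), glueF η s g h i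
      = ∑ i, g i := by
    rw [← Finset.sum_filter_add_sum_filter_not Finset.univ (fun i : Fin n => i.1 < Sp η s) g]
    rw [Finset.sum_congr rfl (fun i hi => glueF_lo (Finset.mem_filter.mp hi).2)]
    have h0 : ∑ i ∈ Finset.univ.filter (fun i : Fin n => ¬ i.1 < Sp η s), g i = 0 :=
      Finset.sum_eq_zero fun i hi => hz i (by
        have := (Finset.mem_filter.mp hi).2
        omega)
    omega
  rw [e1]
  congr 1
  have e2 : ∑ i ∈ Finset.univ.filter (fun i : Fin n => ¬ i.1 < Sp η s), glueF η s g h i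
      = ∑ i ∈ Finset.univ.filter (fun i : Fin n => Sp η s ≤ i.1 ∧ i.1 < Sp η s + η s),
          glueF η s g h i := by
    symm
    refine Finset.sum_subset (fun i hi => ?_) (fun i hi hni => ?_)
    · simp only [Finset.mem_filter, Finset.mem_univ, true_and] at hi ⊢
      omega
    · simp only [Finset.mem_filter, Finset.mem_univ, true_and] at hi hni
      exact glueF_hi (by omega)
  rw [e2]
  symm
  refine Finset.sum_nbij' (fun t => (⟨Sp η s + t.1, by omega⟩ : Fin n))
    (fun i => if h2 : i.1 - Sp η s < η s then (⟨i.1 - Sp η s, h2⟩ : Fin (η s))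
      else ⟨0, hp⟩) ?_ ?_ ?_ ?_ ?_
  · intro t ht
    simp only [Finset.mem_filter, Finset.mem_univ, true_and]
    have := t.2
    constructor
    · omega
    · omega
  · intro i hi
    exact Finset.mem_univ _
  · intro t ht
    dsimp only
    rw [dif_pos (show ((⟨Sp η s + t.1, by omega⟩ : Fin n)).1 - Sp η s < η s by
      simp only [Fin.val_mk]; have := t.2; omega)]
    apply Fin.ext
    simp only [Fin.val_mk]
    omega
  · intro i hi
    simp only [Finset.mem_filter, Finset.mem_univ, true_and] at hi
    rw [dif_pos (show i.1 - Sp η s < η s by omega)]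
    apply Fin.ext
    simp only [Fin.val_mk]
    omega
  · intro t ht
    rw [glueF_mid (show Sp η s ≤ ((⟨Sp η s + t.1, by omega⟩ : Fin n)).1 by
        simp only [Fin.val_mk]; omega)
      (show ((⟨Sp η s + t.1, by omega⟩ : Fin n)).1 - Sp η s < η s by
        simp only [Fin.val_mk]; have := t.2; omega)]
    congr 1
    apply Fin.ext
    simp only [Fin.val_mk]
    omega

lemma mem_Dec {m k : ℕ} {g : Fin m → ℕ} :
    g ∈ Dec m k ↔ (∀ i, g i ≤ k) ∧ ∀ i j : Fin m, i ≤ j → g j ≤ g i := by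
  simp only [Dec, Finset.mem_filter, Fintype.mem_piFinset, Finset.mem_range]
  constructor
  · rintro ⟨h1, h2⟩; exact ⟨fun i => by have := h1 i; omega, h2⟩
  · rintro ⟨h1, h2⟩; exact ⟨fun i => by have := h1 i; omega, h2⟩

lemma prod_Ssum (x : F) (n r : ℕ) (η : ℕ → ℕ) (k : ℕ) (hpos : ∀ b, b < r → 0 < η b)
    (hsr : Sp η r ≤ n) :
    ∀ s, s ≤ r → ∏ i ∈ range s, Ssum x (η i) k = ∑ g ∈ BDpart n r η s k, x ^ (∑ i, g i) := by
  intro s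
  induction s with
  | zero =>
    intro _
    rw [BDpart_zero, Finset.sum_singleton]
    simp
  | succ s ih =>
    intro hs
    have hsp : Sp η (s + 1) ≤ Sp η r := Sp_mono η hs
    have hspn : Sp η s + η s ≤ n := by
      have := Sp_succ η s; omega
    have hps : 0 < η s := hpos s (by omega)
    rw [Finset.prod_range_succ, ih (by omega), Ssum, Finset.sum_mul_sum]
    rw [show (∑ g ∈ BDpart n r η s k, ∑ h ∈ Dec (η s) k, x ^ (∑ i, g i) * x ^ (∑ t, h t))
        = ∑ p ∈ (BDpart n r η s k) ×ˢ (Dec (η s) k), x ^ ((∑ i, p.1 i) + (∑ t, p.2 t)) by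
      rw [Finset.sum_product]
      exact Finset.sum_congr rfl fun g _ => Finset.sum_congr rfl fun h _ => (pow_add x _ _).symm]
    refine Finset.sum_nbij' (fun p => glueF η s p.1 p.2)
      (fun G => (fun i => if i.1 < Sp η s then G i else 0,
        fun t : Fin (η s) => G ⟨Sp η s + t.1, by omega⟩)) ?_ ?_ ?_ ?_ ?_
    · rintro ⟨g, h⟩ hp
      rw [Finset.mem_product] at hp
      obtain ⟨hg, hh⟩ := hp
      obtain ⟨hgb, hgz, hgd⟩ := mem_BDpart.mp hg
      obtain ⟨hhb, hhd⟩ := mem_Dec.mp hh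
      dsimp only at hgb hgz hgd hhb hhd ⊢
      rw [mem_BDpart]
      refine ⟨fun i => ?_, fun i hi => ?_, fun i h1 h2 h3 => ?_⟩
      · rcases lt_or_ge i.1 (Sp η s) with hc | hc
        · rw [glueF_lo hc]; exact hgb i
        · rcases lt_or_ge (i.1 - Sp η s) (η s) with hc2 | hc2
          · rw [glueF_mid hc hc2]; exact hhb _
          · rw [glueF_hi (by omega)]; omega
      · rw [Sp_succ] at hi
        exact glueF_hi hi
      · rw [Sp_succ] at h2
        rcases lt_or_ge (i + 1) (Sp η s) with hc | hc
        · rw [glueF_lo (show ((⟨i+1, h1⟩ : Fin n)).1 < Sp η s from hc),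
            glueF_lo (show ((⟨i, by omega⟩ : Fin n)).1 < Sp η s by dsimp only; omega)]
          exact hgd i h1 hc h3
        · rcases eq_or_lt_of_le hc with hc1 | hc1
          · -- i + 1 = Sp η s : impossible since blocks differ
            exfalso
            have hb1 : blk r η i < s := blk_lt_of_lt r η (le_of_lt hs) (by omega)
            have hb2 : blk r η (Sp η s + 0) = s := blk_eval r η (by omega) hps
            rw [Nat.add_zero] at hb2
            rw [hc1] at hb2
            omega
          · -- interior of the new block
            rw [glueF_mid (show Sp η s ≤ ((⟨i+1, h1⟩ : Fin n)).1 by dsimp only; omega)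
                (show ((⟨i+1, h1⟩ : Fin n)).1 - Sp η s < η s by dsimp only; omega),
              glueF_mid (show Sp η s ≤ ((⟨i, by omega⟩ : Fin n)).1 by dsimp only; omega)
                (show ((⟨i, by omega⟩ : Fin n)).1 - Sp η s < η s by dsimp only; omega)]
            refine hhd _ _ ?_
            rw [Fin.mk_le_mk]
            dsimp only
            omega
    · intro G hG
      obtain ⟨hGb, hGz, hGd⟩ := mem_BDpart.mp hG
      rw [Finset.mem_product]
      constructor
      · rw [mem_BDpart]
        refine ⟨fun i => ?_, fun i hi => ?_, fun i h1 h2 h3 => ?_⟩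
        · dsimp only
          split_ifs
          · exact hGb i
          · omega
        · dsimp only
          rw [if_neg (by omega)]
        · dsimp only
          rw [if_pos (show (i : ℕ) + 1 < Sp η s from h2), if_pos (by omega)]
          exact hGd i h1 (by rw [Sp_succ]; omega) h3
      · rw [mem_Dec]
        refine ⟨fun t => hGb _, fun a b hab => ?_⟩
        refine BDpart_blockmono hG (Sp η s + a.1) (Sp η s + b.1) (by omega) (by omega)
          (by have := Fin.le_def.mp hab; omega) (by rw [Sp_succ]; have := b.2; omega) ?_
        rw [blk_eval r η (by omega) a.2, blk_eval r η (by omega) b.2]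
    · rintro ⟨g, h⟩ hp
      rw [Finset.mem_product] at hp
      obtain ⟨hg, hh⟩ := hp
      obtain ⟨hgb, hgz, hgd⟩ := mem_BDpart.mp hg
      dsimp only
      refine Prod.ext ?_ ?_
      · dsimp only
        funext i
        split_ifs with hc
        · exact glueF_lo hc
        · exact (hgz i (by omega)).symm
      · dsimp only
        funext t
        rw [glueF_mid (show Sp η s ≤ ((⟨Sp η s + t.1, by omega⟩ : Fin n)).1 by
            dsimp only; omega)
          (show ((⟨Sp η s + t.1, by omega⟩ : Fin n)).1 - Sp η s < η s by
            dsimp only; have := t.2; omega)]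
        congr 1
        apply Fin.ext
        dsimp only
        omega
    · intro G hG
      obtain ⟨hGb, hGz, hGd⟩ := mem_BDpart.mp hG
      funext i
      dsimp only
      rcases lt_or_ge i.1 (Sp η s) with hc | hc
      · rw [glueF_lo hc, if_pos hc]
      · rcases lt_or_ge (i.1 - Sp η s) (η s) with hc2 | hc2
        · rw [glueF_mid hc hc2]
          have : (⟨Sp η s + (⟨i.1 - Sp η s, hc2⟩ : Fin (η s)).1, by omega⟩ : Fin n) = i := by
            apply Fin.ext
            dsimp only
            omega
          rw [this]
        · rw [glueF_hi (by omega)]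
          exact (hGz i (by rw [Sp_succ]; omega)).symm
    · rintro ⟨g, h⟩ hp
      rw [Finset.mem_product] at hp
      dsimp only
      rw [sum_glueF hspn hps g h hp.1]

/-! ### Compatible functions, step A -/

lemma antitone_adj {n : ℕ} {g : Fin n → ℕ}
    (h : ∀ (i : ℕ) (h1 : i + 1 < n), g ⟨i + 1, h1⟩ ≤ g ⟨i, by omega⟩) :
    ∀ i j : Fin n, i ≤ j → g j ≤ g i := by
  have key : ∀ (d a : ℕ) (han : a < n) (hdn : a + d < n), g ⟨a + d, hdn⟩ ≤ g ⟨a, han⟩ := by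
    intro d
    induction d with
    | zero => intro a _ _; exact le_refl _
    | succ d ih =>
      intro a han hdn
      have step : g ⟨a + d + 1, by omega⟩ ≤ g ⟨a + d, by omega⟩ := h (a + d) (by omega)
      exact le_trans step (ih a han (by omega))
  intro i j hij
  have h2 : i.1 + (j.1 - i.1) = j.1 := by have := Fin.le_def.mp hij; omega
  have hk := key (j.1 - i.1) i.1 i.2 (by omega)
  have hfin : (⟨i.1 + (j.1 - i.1), by omega⟩ : Fin n) = j := Fin.ext h2
  rw [hfin] at hk
  convert hk using 2

def cfun (n : ℕ) (w : Fin n → ℕ) (j : ℕ) : ℕ :=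
  ((desSet n w).filter (fun i => j ≤ i.1)).card

lemma cfun_zero (n : ℕ) (w : Fin n → ℕ) : cfun n w 0 = des n w := by
  rw [cfun, des]
  congr 1
  exact Finset.filter_true_of_mem (fun i _ => Nat.zero_le _)

lemma cfun_anti (n : ℕ) (w : Fin n → ℕ) {j j' : ℕ} (h : j ≤ j') :
    cfun n w j' ≤ cfun n w j := by
  refine Finset.card_le_card fun i hi => ?_
  simp only [Finset.mem_filter] at hi ⊢
  exact ⟨hi.1, by omega⟩

lemma cfun_le_des (n : ℕ) (w : Fin n → ℕ) (j : ℕ) : cfun n w j ≤ des n w :=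
  Finset.card_le_card (Finset.filter_subset _ _)

lemma cfun_succ (n : ℕ) (w : Fin n → ℕ) {j : ℕ} (hj : j < n) :
    cfun n w j = cfun n w (j + 1) + (if (⟨j, hj⟩ : Fin n) ∈ desSet n w then 1 else 0) := by
  rw [cfun, cfun]
  have hsplit : (desSet n w).filter (fun i => j ≤ i.1)
      = ((desSet n w).filter (fun i => j + 1 ≤ i.1)) ∪
        ((desSet n w).filter (fun i => i = ⟨j, hj⟩)) := by
    ext i
    simp only [Finset.mem_filter, Finset.mem_union]
    constructor
    · rintro ⟨h1, h2⟩
      rcases Nat.lt_or_ge i.1 (j + 1) with hc | hc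
      · exact Or.inr ⟨h1, Fin.ext (show i.1 = j by omega)⟩
      · exact Or.inl ⟨h1, hc⟩
    · rintro (⟨h1, h2⟩ | ⟨h1, h2⟩)
      · exact ⟨h1, by omega⟩
      · refine ⟨h1, ?_⟩
        rw [h2]
  rw [hsplit, Finset.card_union_of_disjoint]
  · congr 1
    rw [Finset.filter_eq']
    split_ifs with hmem <;> simp
  · rw [Finset.disjoint_left]
    intro i hi1 hi2
    simp only [Finset.mem_filter] at hi1 hi2
    have h2 := hi2.2
    rw [h2] at hi1
    have h3 := hi1.2
    have hv : ((⟨j, hj⟩ : Fin n) : ℕ) = j := rfl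
    omega

lemma sum_cfun (n : ℕ) (w : Fin n → ℕ) : ∑ i : Fin n, cfun n w i.1 = maj n w := by
  rw [maj]
  have hc : ∀ i : Fin n, cfun n w i.1 = ∑ d ∈ desSet n w, if i.1 ≤ d.1 then 1 else 0 :=
    fun i => Finset.card_filter _ _
  rw [Finset.sum_congr rfl (fun i _ => hc i), Finset.sum_comm]
  refine Finset.sum_congr rfl fun d hd => ?_
  rw [Fin.sum_univ_eq_sum_range (fun j => if j ≤ d.1 then 1 else 0) n]
  rw [← Finset.card_filter]
  have : (range n).filter (fun j => j ≤ d.1) = range (d.1 + 1) := by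
    ext j
    simp only [Finset.mem_filter, Finset.mem_range]
    have := d.2
    omega
  rw [this, Finset.card_range]

def CompatF (n : ℕ) (w : Fin n → ℕ) (k : ℕ) : Finset (Fin n → ℕ) :=
  (Fintype.piFinset fun _ : Fin n => Finset.range (k + 1)).filter
    fun f => ∀ (i : ℕ) (h1 : i + 1 < n),
      f ⟨i + 1, h1⟩ ≤ f ⟨i, by omega⟩ ∧
        (w ⟨i + 1, h1⟩ < w ⟨i, by omega⟩ → f ⟨i + 1, h1⟩ < f ⟨i, by omega⟩)

lemma mem_CompatF {n k : ℕ} {w f : Fin n → ℕ} :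
    f ∈ CompatF n w k ↔ (∀ i, f i ≤ k) ∧ ∀ (i : ℕ) (h1 : i + 1 < n),
      f ⟨i + 1, h1⟩ ≤ f ⟨i, by omega⟩ ∧
        (w ⟨i + 1, h1⟩ < w ⟨i, by omega⟩ → f ⟨i + 1, h1⟩ < f ⟨i, by omega⟩) := by
  simp only [CompatF, Finset.mem_filter, Fintype.mem_piFinset, Finset.mem_range]
  constructor
  · rintro ⟨h1, h2⟩; exact ⟨fun i => by have := h1 i; omega, h2⟩
  · rintro ⟨h1, h2⟩; exact ⟨fun i => by have := h1 i; omega, h2⟩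

lemma cfun_le_f {n k : ℕ} {w f : Fin n → ℕ} (hf : f ∈ CompatF n w k) :
    ∀ (j : ℕ) (hj : j < n), cfun n w j ≤ f ⟨j, hj⟩ := by
  obtain ⟨-, hdec⟩ := mem_CompatF.mp hf
  have key : ∀ (t j : ℕ) (hj : j < n), n ≤ j + t → cfun n w j ≤ f ⟨j, hj⟩ := by
    intro t
    induction t with
    | zero => intro j hj hle; omega
    | succ t ih =>
      intro j hj hle
      rcases Nat.lt_or_ge (j + 1) n with hj1 | hj1
      · have hstep := cfun_succ n w hj
        have hdj := hdec j hj1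
        have hih := ih (j + 1) hj1 (by omega)
        by_cases hd : (⟨j, hj⟩ : Fin n) ∈ desSet n w
        · have hwd : w ⟨j + 1, hj1⟩ < w ⟨j, hj⟩ := by
            simp only [desSet, Finset.mem_filter, Finset.mem_univ, true_and] at hd
            obtain ⟨h', hlt⟩ := hd
            exact hlt
          have hstrict := hdj.2 hwd
          rw [hstep, if_pos hd]
          omega
        · rw [hstep, if_neg hd]
          have := hdj.1
          omega
      · have h0 : cfun n w j = 0 := by
          rw [cfun, Finset.card_eq_zero, Finset.filter_eq_empty_iff]
          intro i hi
          simp only [desSet, Finset.mem_filter, Finset.mem_univ, true_and] at hi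
          obtain ⟨h', -⟩ := hi
          omega
        omega
  intro j hj
  exact key n j hj (by omega)

lemma stepA (x : F) (n k : ℕ) (w : Fin n → ℕ) :
    (∑ f ∈ CompatF n w k, x ^ (∑ i, f i))
      = if des n w ≤ k then x ^ maj n w * Ssum x n (k - des n w) else 0 := by
  by_cases hdk : des n w ≤ k
  · rw [if_pos hdk, Ssum, Finset.mul_sum]
    rw [show (∑ g ∈ Dec n (k - des n w), x ^ maj n w * x ^ ∑ i, g i)
        = ∑ g ∈ Dec n (k - des n w), x ^ (maj n w + ∑ i, g i) from
      Finset.sum_congr rfl fun g _ => (pow_add x _ _).symm]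
    symm
    refine Finset.sum_nbij' (fun μ => fun i : Fin n => μ i + cfun n w i.1)
      (fun f => fun i : Fin n => f i - cfun n w i.1) ?_ ?_ ?_ ?_ ?_
    · intro μ hμ
      obtain ⟨hb, hd⟩ := mem_Dec.mp hμ
      refine mem_CompatF.mpr ⟨?_, ?_⟩
      · intro i
        have h1 := hb i
        have h2 := cfun_le_des n w i.1
        omega
      · intro i h1
        dsimp only
        have hcs := cfun_succ n w (show i < n by omega)
        have hdd : μ ⟨i + 1, h1⟩ ≤ μ ⟨i, by omega⟩ :=
          hd ⟨i, by omega⟩ ⟨i + 1, h1⟩ (Fin.mk_le_mk.mpr (by omega))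
        constructor
        · have := cfun_anti n w (show i ≤ i + 1 by omega)
          omega
        · intro hw
          have hdes : (⟨i, by omega⟩ : Fin n) ∈ desSet n w := by
            simp only [desSet, Finset.mem_filter, Finset.mem_univ, true_and]
            exact ⟨h1, hw⟩
          rw [if_pos hdes] at hcs
          omega
    · intro f hf
      obtain ⟨hb, hd⟩ := mem_CompatF.mp hf
      have hcle := cfun_le_f hf
      rw [mem_Dec]
      have hadj : ∀ (i : ℕ) (h1 : i + 1 < n),
          (fun i : Fin n => f i - cfun n w i.1) ⟨i + 1, h1⟩
            ≤ (fun i : Fin n => f i - cfun n w i.1) ⟨i, by omega⟩ := by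
        intro i h1
        dsimp only
        have hcs := cfun_succ n w (show i < n by omega)
        have hdi := hd i h1
        have hc1 := hcle i (by omega)
        have hc2 := hcle (i + 1) h1
        by_cases hdes : (⟨i, by omega⟩ : Fin n) ∈ desSet n w
        · rw [if_pos hdes] at hcs
          have hwlt : w ⟨i + 1, h1⟩ < w ⟨i, by omega⟩ := by
            simp only [desSet, Finset.mem_filter, Finset.mem_univ, true_and] at hdes
            obtain ⟨h', hlt⟩ := hdes
            exact hlt
          have := hdi.2 hwlt
          omega
        · rw [if_neg hdes] at hcs
          have := hdi.1
          omega
      have hanti := antitone_adj (g := fun i : Fin n => f i - cfun n w i.1) hadj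
      constructor
      · intro i
        have hn : (0 : ℕ) < n := by have := i.2; omega
        have h0 := hanti ⟨0, hn⟩ i (by rw [Fin.le_def]; exact Nat.zero_le _)
        dsimp only at h0 ⊢
        have hb0 := hb ⟨0, hn⟩
        have : cfun n w (0 : ℕ) = des n w := cfun_zero n w
        omega
      · exact hanti
    · intro μ hμ
      funext i
      dsimp only
      omega
    · intro f hf
      have hcle := cfun_le_f hf
      funext i
      dsimp only
      have h2 : cfun n w i.1 ≤ f i := cfun_le_f hf i.1 i.2
      omega
    · intro μ hμ
      congr 1
      rw [Finset.sum_add_distrib, sum_cfun]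
      omega
  · rw [if_neg hdk]
    have hempty : CompatF n w k = ∅ := by
      rw [Finset.eq_empty_iff_forall_notMem]
      intro f hf
      have hdes : 0 < des n w := by omega
      have hn : 0 < n := by
        rw [des] at hdes
        obtain ⟨d, hd⟩ := Finset.card_pos.mp hdes
        exact d.pos
      have h1 := cfun_le_f hf 0 hn
      rw [cfun_zero] at h1
      have h2 := (mem_CompatF.mp hf).1 ⟨0, hn⟩
      omega
    rw [hempty, Finset.sum_empty]

/-! ### Step B : the sorting bijection -/

lemma monotone_adj {α : Type*} [Preorder α] {n : ℕ} {g : Fin n → α}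
    (h : ∀ (i : ℕ) (h1 : i + 1 < n), g ⟨i, by omega⟩ ≤ g ⟨i + 1, h1⟩) : Monotone g := by
  have key : ∀ (d a : ℕ) (han : a < n) (hdn : a + d < n), g ⟨a, han⟩ ≤ g ⟨a + d, hdn⟩ := by
    intro d
    induction d with
    | zero => intro a _ _; exact le_refl _
    | succ d ih =>
      intro a han hdn
      have step : g ⟨a + d, by omega⟩ ≤ g ⟨a + d + 1, by omega⟩ := h (a + d) (by omega)
      exact le_trans (ih a han (by omega)) step
  intro i j hij
  have h2 : i.1 + (j.1 - i.1) = j.1 := by have := Fin.le_def.mp hij; omega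
  have hk := key (j.1 - i.1) i.1 i.2 (by omega)
  have hfin : (⟨i.1 + (j.1 - i.1), by omega⟩ : Fin n) = j := Fin.ext h2
  rw [hfin] at hk
  convert hk using 2

def blkw (n r : ℕ) (η : ℕ → ℕ) : Fin n → ℕ := fun i => blk r η i.1

lemma blkw_monotone (n r : ℕ) (η : ℕ → ℕ) : Monotone (blkw n r η) :=
  fun i j h => blk_mono r η (Fin.le_def.mp h)

lemma sorted_msetPerm {n r : ℕ} {η : ℕ → ℕ} {w : Fin n → ℕ} (hw : w ∈ msetPerms r η n) :
    w ∘ (Tuple.sort w) = blkw n r η := by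
  obtain ⟨σ, -, hσ⟩ := Finset.mem_image.mp hw
  have hw' : w = blkw n r η ∘ σ := by rw [← hσ]; rfl
  have h1 : Monotone (w ∘ Tuple.sort w) := Tuple.monotone_sort w
  have hcomp : w ∘ ⇑(Tuple.sort w) = blkw n r η ∘ ⇑((Tuple.sort w).trans σ) := by
    rw [hw']
    funext i
    simp [Equiv.trans_apply]
  have h2 : Monotone (blkw n r η ∘ ⇑((Tuple.sort w).trans σ)) := by
    rw [← hcomp]; exact h1
  have h3 : Monotone (blkw n r η ∘ ⇑(Equiv.refl (Fin n))) := by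
    simpa using blkw_monotone n r η
  have := Tuple.unique_monotone h2 h3
  rw [hcomp, this]
  simp

def keyf (r : ℕ) (η : ℕ → ℕ) (n k : ℕ) (g : Fin n → ℕ) : Fin n → ℕ ×ₗ ℕ :=
  fun p => toLex (k - g p, blk r η p.1)

lemma stepB (x : F) (n r k : ℕ) (η : ℕ → ℕ) (hsr : Sp η r = n) :
    (∑ g ∈ BDpart n r η r k, x ^ (∑ i, g i))
      = ∑ p ∈ (msetPerms r η n).sigma (fun w => CompatF n w k), x ^ (∑ i, p.2 i) := by
  refine Finset.sum_nbij'
    (fun g => ⟨blkw n r η ∘ ⇑(Tuple.sort (keyf r η n k g)),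
      g ∘ ⇑(Tuple.sort (keyf r η n k g))⟩)
    (fun p => p.2 ∘ ⇑(Tuple.sort p.1)) ?_ ?_ ?_ ?_ ?_
  · -- membership of forward image
    intro g hg
    obtain ⟨hb, hz, hbd⟩ := mem_BDpart.mp hg
    set τ := Tuple.sort (keyf r η n k g) with hτ
    have hmono : Monotone (keyf r η n k g ∘ ⇑τ) := (Tuple.eq_sort_iff.mp hτ).1
    rw [Finset.mem_sigma]
    constructor
    · exact Finset.mem_image.mpr ⟨τ, Finset.mem_univ _, rfl⟩
    · refine mem_CompatF.mpr ⟨fun i => hb _, fun i h1 => ?_⟩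
      have hab : (⟨i, by omega⟩ : Fin n) ≤ ⟨i + 1, h1⟩ := Fin.mk_le_mk.mpr (by omega)
      have hkey := hmono hab
      simp only [Function.comp_apply, keyf, Prod.Lex.le_iff, ofLex_toLex] at hkey
      have hb1 := hb (τ ⟨i, by omega⟩)
      have hb2 := hb (τ ⟨i + 1, h1⟩)
      constructor
      · dsimp only [Function.comp_apply]
        rcases hkey with hlt | ⟨heq, -⟩ <;> omega
      · intro hwlt
        dsimp only [Function.comp_apply] at hwlt ⊢
        simp only [blkw] at hwlt
        rcases hkey with hlt | ⟨heq, hle⟩ <;> omega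
  · -- membership of inverse image
    rintro ⟨w, f⟩ hp
    rw [Finset.mem_sigma] at hp
    obtain ⟨hw, hf⟩ := hp
    dsimp only at hw hf
    obtain ⟨hfb, hfd⟩ := mem_CompatF.mp hf
    have hsort : w ∘ ⇑(Tuple.sort w) = blkw n r η := sorted_msetPerm hw
    have htie := (Tuple.eq_sort_iff (f := w)).mp rfl
    dsimp only
    refine mem_BDpart.mpr ⟨fun i => hfb _, fun i hi => absurd hi (by have := i.2; omega), ?_⟩
    · intro i h1 h2 hblk
      set ρ := Tuple.sort w with hρ
      have hwa : w (ρ ⟨i, by omega⟩) = blk r η i := congrFun hsort ⟨i, by omega⟩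
      have hwb : w (ρ ⟨i + 1, h1⟩) = blk r η (i + 1) := congrFun hsort ⟨i + 1, h1⟩
      have hweq : w (ρ ⟨i, by omega⟩) = w (ρ ⟨i + 1, h1⟩) := by rw [hwa, hwb, hblk]
      have hρlt : ρ ⟨i, by omega⟩ < ρ ⟨i + 1, h1⟩ :=
        htie.2 ⟨i, by omega⟩ ⟨i + 1, h1⟩ (Fin.mk_lt_mk.mpr (by omega)) hweq
      have hanti := antitone_adj (g := f) (fun i h1 => (hfd i h1).1)
      exact hanti _ _ (le_of_lt hρlt)
  · -- left inverse
    intro g hg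
    obtain ⟨hb, hz, hbd⟩ := mem_BDpart.mp hg
    set τ := Tuple.sort (keyf r η n k g) with hτ
    have hmono : Monotone (keyf r η n k g ∘ ⇑τ) := (Tuple.eq_sort_iff.mp hτ).1
    have htie := (Tuple.eq_sort_iff (f := keyf r η n k g)).mp hτ
    have hW := BDpart_blockmono hg
    have hsw : Tuple.sort (blkw n r η ∘ ⇑τ) = τ.symm := by
      symm
      rw [Tuple.eq_sort_iff]
      constructor
      · have : (blkw n r η ∘ ⇑τ) ∘ ⇑τ.symm = blkw n r η := by
          funext i
          simp [Equiv.apply_symm_apply]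
        rw [this]
        exact blkw_monotone n r η
      · intro i j hij heqv
        simp only [Function.comp_apply, Equiv.apply_symm_apply, blkw] at heqv
        by_contra hc
        push_neg at hc
        have hne : τ.symm i ≠ τ.symm j := fun hcon => by
          have := τ.symm.injective hcon
          omega
        have hlt2 : τ.symm j < τ.symm i := lt_of_le_of_ne hc (Ne.symm hne)
        have hkey := hmono (le_of_lt hlt2)
        simp only [Function.comp_apply, Equiv.apply_symm_apply, keyf, Prod.Lex.le_iff, ofLex_toLex] at hkey
        have hgji : g j ≤ g i := by
          refine hW i.1 j.1 i.2 j.2 (by exact Fin.le_def.mp (le_of_lt hij)) (by have := j.2; omega) ?_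
          · exact heqv
        have hb1 := hb i
        have hb2 := hb j
        have hgeq : g i = g j := by
          rcases hkey with hlt | ⟨heq, -⟩ <;> omega
        have hkeyeq : keyf r η n k g (τ (τ.symm j)) = keyf r η n k g (τ (τ.symm i)) := by
          simp only [Equiv.apply_symm_apply, keyf]
          rw [hgeq, heqv]
        have := htie.2 _ _ hlt2 hkeyeq
        simp only [Equiv.apply_symm_apply] at this
        omega
    dsimp only
    rw [hsw]
    funext i
    simp [Equiv.apply_symm_apply]
  · -- right inverse
    rintro ⟨w, f⟩ hp
    rw [Finset.mem_sigma] at hp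
    obtain ⟨hw, hf⟩ := hp
    dsimp only at hw hf
    obtain ⟨hfb, hfd⟩ := mem_CompatF.mp hf
    have hsort : w ∘ ⇑(Tuple.sort w) = blkw n r η := sorted_msetPerm hw
    have htiew := (Tuple.eq_sort_iff (f := w)).mp rfl
    set ρ := Tuple.sort w with hρ
    dsimp only
    have hkeyc : keyf r η n k (f ∘ ⇑ρ) ∘ ⇑ρ.symm = fun i => toLex (k - f i, w i) := by
      funext i
      simp only [Function.comp_apply, keyf]
      congr 1
      refine Prod.ext ?_ ?_
      · simp [Equiv.apply_symm_apply]
      · have : blk r η ((ρ.symm i) : Fin n).1 = blkw n r η (ρ.symm i) := rfl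
        rw [this, ← hsort]
        simp [Equiv.apply_symm_apply]
    have hsg : Tuple.sort (keyf r η n k (f ∘ ⇑ρ)) = ρ.symm := by
      symm
      rw [Tuple.eq_sort_iff]
      constructor
      · rw [hkeyc]
        refine monotone_adj (fun i h1 => ?_)
        have hfi := hfd i h1
        rw [Prod.Lex.le_iff]
        have hb1 := hfb ⟨i, by omega⟩
        have hb2 := hfb ⟨i + 1, h1⟩
        rcases Nat.lt_or_ge (f ⟨i + 1, h1⟩) (f ⟨i, by omega⟩) with hc | hc
        · left; simp only [ofLex_toLex]; omega
        · right
          constructor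
          · simp only [ofLex_toLex]; omega
          · simp only [ofLex_toLex]
            by_contra hcw
            push_neg at hcw
            have := hfi.2 hcw
            omega
      · intro i j hij heqv
        have hkc1 : keyf r η n k (f ∘ ⇑ρ) (ρ.symm i) = toLex (k - f i, w i) := congrFun hkeyc i
        have hkc2 : keyf r η n k (f ∘ ⇑ρ) (ρ.symm j) = toLex (k - f j, w j) := congrFun hkeyc j
        rw [hkc1, hkc2] at heqv
        have heqv2 := toLex.injective heqv
        have hwij : w i = w j := congrArg Prod.snd heqv2
        by_contra hc
        push_neg at hc
        have hne : ρ.symm i ≠ ρ.symm j := fun hcon => by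
          have := ρ.symm.injective hcon
          exact absurd this (ne_of_lt hij)
        have hlt2 : ρ.symm j < ρ.symm i := lt_of_le_of_ne hc (Ne.symm hne)
        have hweq : w (ρ (ρ.symm j)) = w (ρ (ρ.symm i)) := by
          simp only [Equiv.apply_symm_apply]
          rw [hwij]
        have := htiew.2 _ _ hlt2 hweq
        simp only [Equiv.apply_symm_apply] at this
        omega
    rw [hsg]
    refine Sigma.ext ?_ (heq_of_eq ?_)
    · dsimp only
      funext i
      have : blkw n r η (ρ.symm i) = w (ρ (ρ.symm i)) := (congrFun hsort (ρ.symm i)).symm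
      rw [Function.comp_apply, this]
      simp [Equiv.apply_symm_apply]
    · dsimp only
      funext i
      simp [Equiv.apply_symm_apply]
  · -- weights
    intro g hg
    exact (congrArg (fun t : ℕ => x ^ t) (Equiv.sum_comp (Tuple.sort (keyf r η n k g)) g)).symm

lemma key_identity (x : F) (n r : ℕ) (η : ℕ → ℕ) (hpos : ∀ b, b < r → 0 < η b)
    (hsr : Sp η r = n) :
    (∑ w ∈ msetPerms r η n, C (x ^ maj n w) * (X : PowerSeries F) ^ des n w) *
      (∏ j ∈ range (n + 1), geom (x ^ j))
    = PowerSeries.mk (fun k => ∏ i ∈ range r, Ssum x (η i) k) := by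
  ext k
  rw [PowerSeries.coeff_mul, coeff_mk]
  have hcoeffA : ∀ a : ℕ, coeff a (∑ w ∈ msetPerms r η n,
      C (x ^ maj n w) * (X : PowerSeries F) ^ des n w)
      = ∑ w ∈ msetPerms r η n, x ^ maj n w * (if a = des n w then 1 else 0) := by
    intro a
    rw [map_sum]
    refine Finset.sum_congr rfl fun w _ => ?_
    rw [PowerSeries.coeff_C_mul, PowerSeries.coeff_X_pow]
  calc
    ∑ p ∈ Finset.HasAntidiagonal.antidiagonal k,
        coeff p.1 (∑ w ∈ msetPerms r η n, C (x ^ maj n w) * (X : PowerSeries F) ^ des n w)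
          * coeff p.2 (∏ j ∈ range (n + 1), geom (x ^ j))
      = ∑ p ∈ Finset.HasAntidiagonal.antidiagonal k, ∑ w ∈ msetPerms r η n,
          (x ^ maj n w * (if p.1 = des n w then 1 else 0))
            * coeff p.2 (∏ j ∈ range (n + 1), geom (x ^ j)) := by
        refine Finset.sum_congr rfl fun p _ => ?_
        rw [hcoeffA, Finset.sum_mul]
    _ = ∑ w ∈ msetPerms r η n, ∑ p ∈ Finset.HasAntidiagonal.antidiagonal k,
          (x ^ maj n w * (if p.1 = des n w then 1 else 0))
            * coeff p.2 (∏ j ∈ range (n + 1), geom (x ^ j)) := Finset.sum_comm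
    _ = ∑ w ∈ msetPerms r η n, ∑ f ∈ CompatF n w k, x ^ (∑ i, f i) := by
        refine Finset.sum_congr rfl fun w _ => ?_
        rw [Finset.Nat.sum_antidiagonal_eq_sum_range_succ_mk]
        rw [stepA x n k w]
        have : ∀ a ∈ range (k + 1),
            (x ^ maj n w * (if a = des n w then 1 else 0))
              * coeff (k - a) (∏ j ∈ range (n + 1), geom (x ^ j))
            = if a = des n w then
                x ^ maj n w * coeff (k - a) (∏ j ∈ range (n + 1), geom (x ^ j)) else 0 := by
          intro a _
          split_ifs with h
          · ring
          · ring
        rw [Finset.sum_congr rfl this, Finset.sum_ite_eq' (range (k + 1)) (des n w)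
          (fun a => x ^ maj n w * coeff (k - a) (∏ j ∈ range (n + 1), geom (x ^ j)))]
        rw [coeff_geom_prod]
        simp only [Finset.mem_range, Nat.lt_succ_iff]
    _ = ∑ p ∈ (msetPerms r η n).sigma (fun w => CompatF n w k), x ^ (∑ i, p.2 i) :=
        (Finset.sum_sigma (msetPerms r η n) (fun w => CompatF n w k)
          (fun p => x ^ (∑ i, p.2 i))).symm
    _ = ∑ g ∈ BDpart n r η r k, x ^ (∑ i, g i) := (stepB x n r k η hsr).symm
    _ = ∏ i ∈ range r, Ssum x (η i) k :=
        (prod_Ssum x n r η k hpos (le_of_eq hsr) r (le_refl r)).symm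

end MacAux

open MacAux in
open PowerSeries in
/-- Hadamard-product identity
`W_η(x,y) = (1 − xⁿy) ⊛_{i=1}^r (Π_{j=0}^{η_i} (1 − xʲy))⁻¹`,
as power series in `y`; the `r`-fold Hadamard product is the series whose `k`-th
coefficient is the product of the `k`-th coefficients of the factors. -/
theorem W_eta_hadamard {F : Type*} [Field F] (n r : ℕ) (η : ℕ → ℕ)
    (hpos : ∀ k < r, 0 < η k) (hsum : ∑ k ∈ Finset.range r, η k = n) (x : F) :
    (∑ w ∈ msetPerms r η n, C (x ^ maj n w) * (X : PowerSeries F) ^ des n w) *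
        (∏ j ∈ Finset.range n, (1 - C (x ^ j) * X))⁻¹
      = (1 - C (x ^ n) * X) *
        PowerSeries.mk (fun k => ∏ i ∈ Finset.range r,
          coeff k ((∏ j ∈ Finset.range (η i + 1), (1 - C (x ^ j) * X))⁻¹)) := by
  have hsr : Sp η r = n := hsum
  have hmk : (PowerSeries.mk (fun k => ∏ i ∈ Finset.range r,
        coeff k ((∏ j ∈ Finset.range (η i + 1), (1 - C (x ^ j) * X))⁻¹)))
      = PowerSeries.mk (fun k => ∏ i ∈ range r, Ssum x (η i) k) := by
    congr 1
    funext k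
    refine Finset.prod_congr rfl fun i _ => ?_
    rw [prod_inv_eq, coeff_geom_prod]
  rw [hmk, prod_inv_eq]
  have h2 : (∏ j ∈ range n, geom (x ^ j))
      = (∏ j ∈ range (n + 1), geom (x ^ j)) * (1 - C (x ^ n) * X) := by
    rw [Finset.prod_range_succ, mul_assoc, geom_mul_one_sub, mul_one]
  rw [h2, ← mul_assoc, key_identity x n r η hpos hsr, mul_comm]
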